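/- arXiv:2303.12230 — 2 statements merged into one kernel-verified Lean document; each statement's English description precedes it below -/
import Mathlib

section
/- Let B be the backward shift on ℓ^p(ℕ, ω) with sup_n ω_n/ω_{n+1} < ∞. Suppose there exist a strictly increasing sequence (n_k) of integers, a convergent sequence (x_k) in ℓ^p(ℕ, ω), and a non-zero vector y such that B^{n_k} x_k converges weakly to y. Then liminf_{n→∞} ω_n = 0 (equivalently, B is hypercyclic). -/
open MeasureTheory Filter Topology
open scoped ENNReal

noncomputable section

/-- The weighted measure on the index set `I` giving the point `k` mass `(ω k) ^ p`,
so that `Lp ℂ p (wMeasure p ω)` is the weighted sequence space `ℓ^p(I, ω)`. -/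
def wMeasure {I : Type*} [MeasurableSpace I] (p : ENNReal) (ω : I → ℝ) : Measure I :=
  Measure.sum (fun k => ENNReal.ofReal ((ω k) ^ p.toReal) • Measure.dirac k)

lemma wM_lintegral (p : ENNReal) (ω : ℕ → ℝ) (f : ℕ → ℝ≥0∞) :
    ∫⁻ a, f a ∂(wMeasure p ω) = ∑' i, ENNReal.ofReal ((ω i) ^ p.toReal) * f i := by
  rw [wMeasure, lintegral_sum_measure]
  congr 1; funext i
  rw [lintegral_smul_measure, lintegral_dirac, smul_eq_mul]

lemma wM_singleton (p : ENNReal) (ω : ℕ → ℝ) (j : ℕ) :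
    wMeasure p ω {j} = ENNReal.ofReal ((ω j) ^ p.toReal) := by
  rw [wMeasure, Measure.sum_apply _ (measurableSet_singleton j)]
  rw [tsum_eq_single j]
  · simp
  · intro i hij
    simp [Measure.dirac_apply', Set.indicator_of_notMem, hij]

lemma wM_ae (p : ENNReal) (ω : ℕ → ℝ) (hω : ∀ k, 0 < ω k)
    {f g : ℕ → ℂ} (h : f =ᵐ[wMeasure p ω] g) : f = g := by
  funext j
  by_contra hj
  have h1 : wMeasure p ω {i | f i ≠ g i} = 0 := h
  have h2 : wMeasure p ω {j} ≤ wMeasure p ω {i | f i ≠ g i} :=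
    measure_mono (by simpa using hj)
  rw [h1, wM_singleton, nonpos_iff_eq_zero, ENNReal.ofReal_eq_zero] at h2
  have : 0 < (ω j) ^ p.toReal := Real.rpow_pos_of_pos (hω j) _
  linarith

lemma coord_term (p : ENNReal) (ω : ℕ → ℝ) (hω : ∀ k, 0 < ω k) (f : ℕ → ℂ) (j : ℕ) :
    ENNReal.ofReal ((ω j) ^ p.toReal) * (‖f j‖₊ : ℝ≥0∞) ^ p.toReal
      = ENNReal.ofReal (ω j * ‖f j‖) ^ p.toReal := by
  rw [← enorm_eq_nnnorm, ← ofReal_norm,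
    ENNReal.ofReal_rpow_of_nonneg (norm_nonneg _) ENNReal.toReal_nonneg,
    ← ENNReal.ofReal_mul (Real.rpow_nonneg (hω j).le _),
    ← Real.mul_rpow (hω j).le (norm_nonneg _),
    ENNReal.ofReal_rpow_of_nonneg (mul_nonneg (hω j).le (norm_nonneg _)) ENNReal.toReal_nonneg]

lemma coord_le (p : ENNReal) [Fact (1 ≤ p)] (hp : p ≠ ∞) (ω : ℕ → ℝ) (hω : ∀ k, 0 < ω k)
    (x : Lp ℂ p (wMeasure p ω)) (j : ℕ) :
    ω j * ‖x j‖ ≤ ‖x‖ := by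
  have hp0 : p ≠ 0 := (lt_of_lt_of_le zero_lt_one (Fact.out : 1 ≤ p)).ne'
  have hpt : 0 < p.toReal := ENNReal.toReal_pos hp0 hp
  have h1 : ENNReal.ofReal (ω j * ‖x j‖) ≤ eLpNorm x p (wMeasure p ω) := by
    rw [eLpNorm_eq_lintegral_rpow_enorm_toReal hp0 hp, wM_lintegral]
    have := ENNReal.le_tsum (f := fun i => ENNReal.ofReal ((ω i) ^ p.toReal) * (‖x i‖₊ : ℝ≥0∞) ^ p.toReal) j
    rw [coord_term p ω hω] at this
    calc ENNReal.ofReal (ω j * ‖x j‖)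
        = (ENNReal.ofReal (ω j * ‖x j‖) ^ p.toReal) ^ (1 / p.toReal) := by
          rw [one_div, ENNReal.rpow_rpow_inv hpt.ne']
      _ ≤ _ := ENNReal.rpow_le_rpow this (by positivity)
  have h2 := Lp.eLpNorm_ne_top x
  rw [Lp.norm_def]
  calc ω j * ‖x j‖ = (ENNReal.ofReal (ω j * ‖x j‖)).toReal := by
        rw [ENNReal.toReal_ofReal (mul_nonneg (hω j).le (norm_nonneg _))]
    _ ≤ _ := ENNReal.toReal_mono h2 h1

lemma tail_zero (p : ENNReal) [Fact (1 ≤ p)] (hp : p ≠ ∞) (ω : ℕ → ℝ) (hω : ∀ k, 0 < ω k)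
    (z : Lp ℂ p (wMeasure p ω)) :
    Tendsto (fun m => ω m * ‖z m‖) atTop (𝓝 0) := by
  have hp0 : p ≠ 0 := (lt_of_lt_of_le zero_lt_one (Fact.out : 1 ≤ p)).ne'
  have hpt : 0 < p.toReal := ENNReal.toReal_pos hp0 hp
  have hsum : (∑' i, ENNReal.ofReal ((ω i) ^ p.toReal) * (‖z i‖₊ : ℝ≥0∞) ^ p.toReal) ≠ ∞ := by
    rw [← wM_lintegral]
    exact (lintegral_rpow_enorm_lt_top_of_eLpNorm_lt_top hp0 hp (Lp.eLpNorm_lt_top z)).ne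
  have h1 : Tendsto (fun m => ENNReal.ofReal (ω m * ‖z m‖) ^ p.toReal) atTop (𝓝 0) := by
    have := ENNReal.tendsto_atTop_zero_of_tsum_ne_top hsum
    simpa [coord_term p ω hω] using this
  have h2 : Tendsto (fun m => ENNReal.ofReal (ω m * ‖z m‖)) atTop (𝓝 0) := by
    have := h1.ennrpow_const (1 / p.toReal)
    rw [ENNReal.zero_rpow_of_pos (by positivity)] at this
    convert this using 2 with m
    rw [← ENNReal.rpow_mul, mul_one_div, div_self hpt.ne', ENNReal.rpow_one]
  have h3 := (ENNReal.tendsto_toReal (a := (0 : ℝ≥0∞)) (by simp)).comp h2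
  simp only [ENNReal.toReal_zero] at h3
  convert h3 using 2 with m
  simp only [Function.comp_apply, ENNReal.toReal_ofReal (mul_nonneg (hω m).le (norm_nonneg _))]

def evalCLM (p : ENNReal) [Fact (1 ≤ p)] (hp : p ≠ ∞) (ω : ℕ → ℝ) (hω : ∀ k, 0 < ω k)
    (j : ℕ) : Lp ℂ p (wMeasure p ω) →L[ℂ] ℂ :=
  LinearMap.mkContinuous
    { toFun := fun x => x j
      map_add' := fun a b => by
        have := wM_ae p ω hω (Lp.coeFn_add a b)
        exact congrFun this j
      map_smul' := fun c a => by
        have := wM_ae p ω hω (Lp.coeFn_smul c a)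
        exact congrFun this j }
    ((ω j)⁻¹)
    (fun x => by
      have := coord_le p hp ω hω x j
      rw [inv_mul_eq_div, le_div_iff₀ (hω j)]
      simpa [mul_comm] using this)

lemma evalCLM_apply (p : ENNReal) [Fact (1 ≤ p)] (hp : p ≠ ∞) (ω : ℕ → ℝ) (hω : ∀ k, 0 < ω k)
    (j : ℕ) (x : Lp ℂ p (wMeasure p ω)) : evalCLM p hp ω hω j x = x j := rfl

lemma pow_coord (p : ENNReal) [Fact (1 ≤ p)] (ω : ℕ → ℝ) (hω : ∀ k, 0 < ω k)
    (B : Lp ℂ p (wMeasure p ω) →L[ℂ] Lp ℂ p (wMeasure p ω))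
    (hB : ∀ (x : Lp ℂ p (wMeasure p ω)) (k : ℕ), B x k = x (k + 1))
    (m : ℕ) (x : Lp ℂ p (wMeasure p ω)) (j : ℕ) : (B ^ m) x j = x (j + m) := by
  induction m generalizing x with
  | zero => simp
  | succ m ih =>
    rw [pow_succ, ContinuousLinearMap.mul_apply, ih (B x), hB, ← add_assoc]


theorem stmt3 (p : ENNReal) [Fact (1 ≤ p)] (hp : p ≠ ∞) (ω : ℕ → ℝ) (hω : ∀ k, 0 < ω k)
    (hbdd : ∃ C : ℝ, ∀ n, ω n / ω (n + 1) ≤ C)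
    (B : Lp ℂ p (wMeasure p ω) →L[ℂ] Lp ℂ p (wMeasure p ω))
    (hB : ∀ (x : Lp ℂ p (wMeasure p ω)) (k : ℕ), B x k = x (k + 1))
    (n : ℕ → ℕ) (hn : StrictMono n) (x : ℕ → Lp ℂ p (wMeasure p ω))
    (z : Lp ℂ p (wMeasure p ω)) (hconv : Tendsto x atTop (nhds z))
    (y : Lp ℂ p (wMeasure p ω)) (hy : y ≠ 0)
    (hweak : ∀ f : Lp ℂ p (wMeasure p ω) →L[ℂ] ℂ,
      Tendsto (fun k => f ((B ^ n k) (x k))) atTop (nhds (f y))) :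
    Filter.liminf ω Filter.atTop = 0 := by
  -- Core analytic fact: there is no uniform positive lower bound on ω.
  have core : ¬ ∃ δ : ℝ, 0 < δ ∧ ∀ m, δ ≤ ω m := by
    rintro ⟨δ, hδ, hδω⟩
    -- pick a coordinate where y is nonzero
    obtain ⟨j, hj⟩ : ∃ j, (y : ℕ → ℂ) j ≠ 0 := by
      by_contra h
      push_neg at h
      apply hy
      apply Lp.ext (μ := wMeasure p ω)
      have h0 : (y : ℕ → ℂ) = fun _ => 0 := funext h
      have h1 : ((0 : Lp ℂ p (wMeasure p ω)) : ℕ → ℂ) =ᵐ[wMeasure p ω] (fun _ => 0) :=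
        Lp.coeFn_zero ℂ p (wMeasure p ω)
      rw [h0]
      exact h1.symm
    -- weak convergence at coordinate j
    have hweakj := hweak (evalCLM p hp ω hω j)
    simp only [evalCLM_apply] at hweakj
    have hcoord : ∀ k, ((B ^ n k) (x k) : ℕ → ℂ) j = x k (j + n k) := fun k =>
      pow_coord p ω hω B hB (n k) (x k) j
    simp only [hcoord] at hweakj
    -- the index sequence tends to infinity
    have hidx : Tendsto (fun k => j + n k) atTop atTop :=
      tendsto_atTop_mono (fun k => Nat.le_add_left _ _) hn.tendsto_atTop
    -- term 1: z-coordinates along the index sequence tend to 0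
    have hz : Tendsto (fun k => ‖(z : ℕ → ℂ) (j + n k)‖) atTop (𝓝 0) := by
      have h1 : Tendsto (fun m => ω m * ‖(z : ℕ → ℂ) m‖) atTop (𝓝 0) := tail_zero p hp ω hω z
      have h2 := h1.comp hidx
      have h3 : Tendsto (fun k => δ⁻¹ * (ω (j + n k) * ‖(z : ℕ → ℂ) (j + n k)‖)) atTop (𝓝 0) := by
        simpa using h2.const_mul δ⁻¹
      refine squeeze_zero (fun k => norm_nonneg _) (fun k => ?_) h3
      rw [inv_mul_eq_div, le_div_iff₀ hδ]
      calc ‖(z : ℕ → ℂ) (j + n k)‖ * δ ≤ ‖(z : ℕ → ℂ) (j + n k)‖ * ω (j + n k) := by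
            apply mul_le_mul_of_nonneg_left (hδω _) (norm_nonneg _)
        _ = _ := mul_comm _ _
    -- term 2: the difference tends to 0
    have hsub : ∀ k m, ((x k - z : Lp ℂ p (wMeasure p ω)) : ℕ → ℂ) m
        = (x k : ℕ → ℂ) m - (z : ℕ → ℂ) m := by
      intro k m
      have := wM_ae p ω hω (Lp.coeFn_sub (x k) z)
      exact congrFun this m
    have hnorm : Tendsto (fun k => ‖x k - z‖) atTop (𝓝 0) := by
      rw [tendsto_iff_norm_sub_tendsto_zero] at hconv
      exact hconv
    have hd : Tendsto (fun k => ‖(x k : ℕ → ℂ) (j + n k) - (z : ℕ → ℂ) (j + n k)‖) atTop (𝓝 0) := by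
      have h3 : Tendsto (fun k => δ⁻¹ * ‖x k - z‖) atTop (𝓝 0) := by
        simpa using hnorm.const_mul δ⁻¹
      refine squeeze_zero (fun k => norm_nonneg _) (fun k => ?_) h3
      rw [← hsub, inv_mul_eq_div, le_div_iff₀ hδ]
      calc ‖((x k - z : Lp ℂ p (wMeasure p ω)) : ℕ → ℂ) (j + n k)‖ * δ
          ≤ ‖((x k - z : Lp ℂ p (wMeasure p ω)) : ℕ → ℂ) (j + n k)‖ * ω (j + n k) :=
            mul_le_mul_of_nonneg_left (hδω _) (norm_nonneg _)
        _ = ω (j + n k) * ‖((x k - z : Lp ℂ p (wMeasure p ω)) : ℕ → ℂ) (j + n k)‖ := mul_comm _ _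
        _ ≤ ‖x k - z‖ := coord_le p hp ω hω _ _
    -- combine: x k (j + n k) → 0
    have hlim0 : Tendsto (fun k => (x k : ℕ → ℂ) (j + n k)) atTop (𝓝 0) := by
      rw [tendsto_zero_iff_norm_tendsto_zero]
      refine squeeze_zero (fun k => norm_nonneg _) (fun k => ?_) (by simpa using hd.add hz)
      calc ‖(x k : ℕ → ℂ) (j + n k)‖
          ≤ ‖(x k : ℕ → ℂ) (j + n k) - (z : ℕ → ℂ) (j + n k)‖ + ‖(z : ℕ → ℂ) (j + n k)‖ := by
            simpa using norm_add_le ((x k : ℕ → ℂ) (j + n k) - (z : ℕ → ℂ) (j + n k))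
              ((z : ℕ → ℂ) (j + n k))
        _ = _ := rfl
    exact hj (tendsto_nhds_unique hweakj hlim0)
  -- Deduce liminf ω = 0
  rw [Filter.liminf_eq]
  set S := {a : ℝ | ∀ᶠ m in map ω atTop, a ≤ m} with hSdef
  have hS0 : (0 : ℝ) ∈ S := Eventually.of_forall fun m => (hω m).le
  have hSle : ∀ a ∈ S, a ≤ (0 : ℝ) := by
    intro a ha
    by_contra hlt
    push_neg at hlt
    obtain ⟨N, hN⟩ := eventually_atTop.mp ha
    apply core
    have hne : (Finset.range (N + 1)).Nonempty := ⟨0, by simp⟩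
    set c := (Finset.range (N + 1)).inf' hne ω with hc
    have hcpos : 0 < c := by
      rw [hc, Finset.lt_inf'_iff]
      intro i _
      exact hω i
    refine ⟨min a c, lt_min hlt hcpos, fun m => ?_⟩
    rcases le_or_gt N m with hm | hm
    · exact le_trans (min_le_left _ _) (hN m hm)
    · exact le_trans (min_le_right _ _)
        (Finset.inf'_le ω (Finset.mem_range.mpr (by omega)))
  by_cases bdd : BddAbove S
  · exact le_antisymm (csSup_le ⟨0, hS0⟩ hSle) (le_csSup bdd hS0)
  · exact Real.sSup_of_not_bddAbove bdd
end
end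

section
/- Let B be the backward shift on ℓ^p(ℕ, ω) with sup_k ω_{k+1}/ω_k < ∞ and sup_k ω_k/ω_{k+1} < ∞. If x ∈ ℓ^p(ℕ, ω) is non-zero and the projective orbit Orb(ℂx, B) = {λ B^n x : λ ∈ ℂ, n ∈ ℕ} has a non-zero limit point of the form a_0 e_0 + ⋯ + a_n e_n (a finitely supported vector), then x is a cyclic vector for B. -/
open MeasureTheory Filter Topology
open scoped ENNReal

noncomputable section

section Aux
variable {p : ENNReal} {ω : ℕ → ℝ}

lemma wMeasure_singleton (k : ℕ) :
    wMeasure p ω {k} = ENNReal.ofReal (ω k ^ p.toReal) := by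
  rw [wMeasure, Measure.sum_apply _ (MeasurableSet.singleton k)]
  rw [tsum_eq_single k]
  · simp [Measure.smul_apply, Measure.dirac_apply]
  · intro j hj
    simp [Measure.smul_apply, Measure.dirac_apply, Set.indicator, hj]

lemma ae_all_of (hω : ∀ k, 0 < ω k) {P : ℕ → Prop}
    (h : ∀ᵐ k ∂(wMeasure p ω), P k) : ∀ k, P k := by
  intro k
  by_contra hk
  have h1 : wMeasure p ω {j | ¬ P j} = 0 := h
  have h2 : wMeasure p ω {k} ≤ wMeasure p ω {j | ¬ P j} :=
    measure_mono (by simpa using hk)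
  rw [wMeasure_singleton, h1, le_zero_iff] at h2
  exact (ENNReal.ofReal_pos.mpr (Real.rpow_pos_of_pos (hω k) _)).ne' h2

lemma lintegral_wMeasure (g : ℕ → ℝ≥0∞) :
    ∫⁻ k, g k ∂(wMeasure p ω) = ∑' k, ENNReal.ofReal (ω k ^ p.toReal) * g k := by
  rw [wMeasure, lintegral_sum_measure]
  congr 1
  ext k
  rw [lintegral_smul_measure, lintegral_dirac]
  rfl

def NQ (p : ENNReal) (ω : ℕ → ℝ) (g : ℕ → ℂ) : ℝ≥0∞ :=
  ∑' k, ENNReal.ofReal (ω k ^ p.toReal) * (‖g k‖₊ : ℝ≥0∞) ^ p.toReal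

lemma eLpNorm_eq_NQ (hp0 : p ≠ 0) (hp : p ≠ ∞) (g : ℕ → ℂ) :
    eLpNorm g p (wMeasure p ω) = NQ p ω g ^ (1 / p.toReal) := by
  rw [eLpNorm_eq_lintegral_rpow_enorm_toReal hp0 hp, lintegral_wMeasure, NQ]
  rfl

lemma memℒp_of_NQ (hp0 : p ≠ 0) (hp : p ≠ ∞) {g : ℕ → ℂ} (h : NQ p ω g ≠ ∞) :
    MemLp g p (wMeasure p ω) := by
  constructor
  · exact (Measurable.of_discrete).aestronglyMeasurable
  · rw [eLpNorm_eq_NQ hp0 hp]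
    exact ENNReal.rpow_lt_top_of_nonneg (by positivity) h

lemma NQ_ne_top (hp0 : p ≠ 0) (hp : p ≠ ∞) (f : Lp ℂ p (wMeasure p ω)) :
    NQ p ω ⇑f ≠ ∞ := by
  intro h
  have := Lp.eLpNorm_lt_top f
  rw [eLpNorm_eq_NQ hp0 hp, h] at this
  rw [ENNReal.top_rpow_of_pos (by
    have : 0 < p.toReal := ENNReal.toReal_pos hp0 hp
    positivity)] at this
  exact (lt_irrefl _ this)

end Aux
section Aux2
variable {p : ENNReal} [Fact (1 ≤ p)] {ω : ℕ → ℝ}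

lemma rpow_tendsto_zero {u : ℕ → ℝ≥0∞} {r : ℝ} (hr : 0 < r)
    (h : Tendsto u atTop (𝓝 0)) : Tendsto (fun k => u k ^ r) atTop (𝓝 0) := by
  have hc : ContinuousAt (fun a : ℝ≥0∞ => a ^ r) 0 :=
    (ENNReal.continuous_rpow_const (y := r)).continuousAt
  have := hc.tendsto.comp h
  simpa [Function.comp_def, ENNReal.zero_rpow_of_pos hr] using this

lemma tendsto_Lp_iff_NQ (hp0 : p ≠ 0) (hp : p ≠ ∞)
    (u : ℕ → Lp ℂ p (wMeasure p ω)) (z : Lp ℂ p (wMeasure p ω)) :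
    Tendsto u atTop (𝓝 z) ↔
      Tendsto (fun k => NQ p ω (fun i => u k i - z i)) atTop (𝓝 0) := by
  have hq : 0 < p.toReal := ENNReal.toReal_pos hp0 hp
  have hedist : ∀ k, edist (u k) z = NQ p ω (fun i => u k i - z i) ^ (1 / p.toReal) := by
    intro k
    rw [Lp.edist_def, eLpNorm_eq_NQ hp0 hp]
    rfl
  have hNQ : ∀ k, NQ p ω (fun i => u k i - z i) = edist (u k) z ^ p.toReal := by
    intro k
    rw [hedist k, one_div, ENNReal.rpow_inv_rpow hq.ne']
  rw [tendsto_iff_edist_tendsto_0]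
  constructor
  · intro h
    simp only [hNQ]
    simpa using rpow_tendsto_zero hq h
  · intro h
    have := rpow_tendsto_zero (r := 1 / p.toReal) (by positivity) h
    simpa only [← hedist] using this

end Aux2
section Aux3
variable {p : ENNReal} [Fact (1 ≤ p)] {ω : ℕ → ℝ} (hω : ∀ k, 0 < ω k)
include hω
set_option linter.unusedSectionVars false

lemma Lp.apply_sub (f g : Lp ℂ p (wMeasure p ω)) (k : ℕ) :
    (f - g) k = f k - g k := by
  have := ae_all_of hω (Lp.coeFn_sub f g)
  exact this k

lemma Lp.apply_add (f g : Lp ℂ p (wMeasure p ω)) (k : ℕ) :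
    (f + g) k = f k + g k := by
  have := ae_all_of hω (Lp.coeFn_add f g)
  exact this k

lemma Lp.apply_smul (c : ℂ) (f : Lp ℂ p (wMeasure p ω)) (k : ℕ) :
    (c • f) k = c * f k := by
  have := ae_all_of hω (Lp.coeFn_smul c f)
  exact this k

lemma Lp.apply_zero (k : ℕ) : (0 : Lp ℂ p (wMeasure p ω)) k = 0 := by
  have := ae_all_of hω (Lp.coeFn_zero ℂ p (wMeasure p ω))
  exact this k

lemma Lp.apply_sum {s : Finset ℕ} (f : ℕ → Lp ℂ p (wMeasure p ω)) (k : ℕ) :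
    (∑ i ∈ s, f i) k = ∑ i ∈ s, f i k := by
  classical
  induction s using Finset.induction_on with
  | empty => simpa using Lp.apply_zero hω k
  | insert _ _ hns ih =>
      rw [Finset.sum_insert hns, Finset.sum_insert hns, Lp.apply_add hω, ih]

lemma Lp.apply_toLp {g : ℕ → ℂ} (h : MemLp g p (wMeasure p ω)) (k : ℕ) :
    (h.toLp g) k = g k := by
  have := ae_all_of hω (MemLp.coeFn_toLp h)
  exact this k

lemma Lp.ext_coords {f g : Lp ℂ p (wMeasure p ω)} (h : ∀ k, f k = g k) : f = g :=
  Lp.ext (Filter.Eventually.of_forall h)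

lemma Lp.exists_coord_ne_zero {f : Lp ℂ p (wMeasure p ω)} (hf : f ≠ 0) :
    ∃ k, f k ≠ 0 := by
  by_contra h
  push_neg at h
  exact hf (Lp.ext_coords hω (fun k => by rw [Lp.apply_zero hω]; exact h k))

end Aux3
section Aux4
variable {p : ENNReal} {ω : ℕ → ℝ}

lemma NQ_single (hq : 0 < p.toReal) (i : ℕ) :
    NQ p ω (fun k => if k = i then (1:ℂ) else 0) = ENNReal.ofReal (ω i ^ p.toReal) := by
  rw [NQ, tsum_eq_single i]
  · simp
  · intro j hj
    simp [hj, ENNReal.zero_rpow_of_pos hq]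

end Aux4

set_option maxHeartbeats 2000000 in
/-- if the projective orbit `{λ • B ^ n x : λ ∈ ℂ, n ∈ ℕ}` of a non-zero
vector `x` has a non-zero, finitely supported limit point, then `x` is cyclic for `B`. -/
theorem stmt10 (p : ENNReal) [Fact (1 ≤ p)] (hp : p ≠ ∞) (ω : ℕ → ℝ) (hω : ∀ k, 0 < ω k)
    (hbdd : ∃ C : ℝ, ∀ k, ω k / ω (k + 1) ≤ C)
    (hbdd' : ∃ C : ℝ, ∀ k, ω (k + 1) / ω k ≤ C)
    (B : Lp ℂ p (wMeasure p ω) →L[ℂ] Lp ℂ p (wMeasure p ω))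
    (hB : ∀ (x : Lp ℂ p (wMeasure p ω)) (k : ℕ), B x k = x (k + 1))
    (x : Lp ℂ p (wMeasure p ω)) (hx : x ≠ 0)
    (lam : ℕ → ℂ) (m : ℕ → ℕ) (hm : StrictMono m)
    (y : Lp ℂ p (wMeasure p ω)) (hy : y ≠ 0)
    (N : ℕ) (hfin : ∀ k : ℕ, N < k → y k = 0)
    (hconv : Tendsto (fun k => lam k • (B ^ m k) x) atTop (nhds y)) :
    Dense (↑(Submodule.span ℂ {v : Lp ℂ p (wMeasure p ω) | ∃ j : ℕ, v = (B ^ j) x}) :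
      Set (Lp ℂ p (wMeasure p ω))) := by
  classical
  have hp0 : p ≠ 0 := by
    have h1 : (1 : ℝ≥0∞) ≤ p := Fact.out
    intro h
    rw [h] at h1
    simp at h1
  have hq : 0 < p.toReal := ENNReal.toReal_pos hp0 hp
  -- weight growth
  obtain ⟨C₀, hC₀⟩ := hbdd'
  set C : ℝ := max C₀ 1 with hCdef
  have hC1 : (1 : ℝ) ≤ C := le_max_right _ _
  have hC0 : (0 : ℝ) < C := lt_of_lt_of_le zero_lt_one hC1
  have hstep : ∀ k, ω (k + 1) ≤ C * ω k := by
    intro k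
    have h := hC₀ k
    rw [div_le_iff₀ (hω k)] at h
    calc ω (k + 1) ≤ C₀ * ω k := h
      _ ≤ C * ω k := mul_le_mul_of_nonneg_right (le_max_left _ _) (hω k).le
  have hgrow : ∀ t j, ω (t + j) ≤ C ^ j * ω t := by
    intro t j
    induction j with
    | zero => simp
    | succ j ih =>
        calc ω (t + (j + 1)) = ω ((t + j) + 1) := by rw [Nat.add_assoc]
          _ ≤ C * ω (t + j) := hstep (t + j)
          _ ≤ C * (C ^ j * ω t) := mul_le_mul_of_nonneg_left ih hC0.le
          _ = C ^ (j + 1) * ω t := by ring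
  have hshift : ∀ (g : ℕ → ℂ) (j : ℕ),
      NQ p ω (fun i => if j ≤ i then g (i - j) else 0) ≤
        ENNReal.ofReal ((C ^ j) ^ p.toReal) * NQ p ω g := by
    intro g j
    have hinj : Function.Injective (fun t : ℕ => t + j) := add_left_injective j
    have hsupp : Function.support (fun i => ENNReal.ofReal (ω i ^ p.toReal) *
        (‖(if j ≤ i then g (i - j) else 0)‖₊ : ℝ≥0∞) ^ p.toReal) ⊆
        Set.range (fun t : ℕ => t + j) := by
      intro i hi
      by_contra hri
      have hij : i < j := by
        rcases le_or_gt j i with h | h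
        · exact absurd ⟨i - j, by show i - j + j = i; omega⟩ hri
        · exact h
      apply hi
      simp [Nat.not_le.mpr hij, ENNReal.zero_rpow_of_pos hq]
    have hre : NQ p ω (fun i => if j ≤ i then g (i - j) else 0)
        = ∑' t, ENNReal.ofReal (ω (t + j) ^ p.toReal) * (‖g t‖₊ : ℝ≥0∞) ^ p.toReal := by
      rw [NQ, ← Function.Injective.tsum_eq hinj hsupp]
      apply tsum_congr
      intro t
      simp [Nat.le_add_left, Nat.add_sub_cancel]
    rw [hre]
    calc ∑' t, ENNReal.ofReal (ω (t + j) ^ p.toReal) * (‖g t‖₊ : ℝ≥0∞) ^ p.toReal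
        ≤ ∑' t, ENNReal.ofReal ((C ^ j) ^ p.toReal) *
            (ENNReal.ofReal (ω t ^ p.toReal) * (‖g t‖₊ : ℝ≥0∞) ^ p.toReal) := by
          apply ENNReal.tsum_le_tsum
          intro t
          rw [← mul_assoc]
          apply mul_le_mul_left
          rw [← ENNReal.ofReal_mul (by positivity)]
          apply ENNReal.ofReal_le_ofReal
          rw [← Real.mul_rpow (by positivity) (hω t).le]
          exact Real.rpow_le_rpow (hω _).le (hgrow t j) hq.le
      _ = ENNReal.ofReal ((C ^ j) ^ p.toReal) * NQ p ω g := by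
          rw [ENNReal.tsum_mul_left]; rfl
  -- setup
  set S : Set (Lp ℂ p (wMeasure p ω)) :=
    {v : Lp ℂ p (wMeasure p ω) | ∃ j : ℕ, v = (B ^ j) x} with hS
  set M : Submodule ℂ (Lp ℂ p (wMeasure p ω)) :=
    (Submodule.span ℂ S).topologicalClosure with hM
  have hspanM : Submodule.span ℂ S ≤ M := Submodule.le_topologicalClosure _
  have hMclosed : IsClosed (M : Set (Lp ℂ p (wMeasure p ω))) :=
    Submodule.isClosed_topologicalClosure _
  have hMcoe : (M : Set (Lp ℂ p (wMeasure p ω))) =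
      closure (Submodule.span ℂ S : Set (Lp ℂ p (wMeasure p ω))) :=
    Submodule.topologicalClosure_coe _
  have hBpow : ∀ (j : ℕ) (z : Lp ℂ p (wMeasure p ω)) (k : ℕ), ((B ^ j) z) k = z (j + k) := by
    intro j
    induction j with
    | zero => intro z k; simp
    | succ j ih =>
        intro z k
        have h1 : (B ^ (j + 1)) z = (B ^ j) (B z) := by
          rw [pow_succ]; rfl
        rw [h1, ih (B z) k, hB z (j + k)]
        congr 1
        omega
  have hBinv : ∀ v ∈ M, B v ∈ M := by
    intro v hv
    have hmaps : Set.MapsTo B (Submodule.span ℂ S : Set (Lp ℂ p (wMeasure p ω)))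
        (Submodule.span ℂ S : Set (Lp ℂ p (wMeasure p ω))) := by
      intro w hw
      have hle : (Submodule.span ℂ S).map (B : Lp ℂ p (wMeasure p ω) →ₗ[ℂ] Lp ℂ p (wMeasure p ω)) ≤ Submodule.span ℂ S := by
        rw [Submodule.map_span]
        apply Submodule.span_le.mpr
        rintro u ⟨v', ⟨j, rfl⟩, rfl⟩
        apply Submodule.subset_span
        exact ⟨j + 1, by rw [pow_succ']; rfl⟩
      exact hle ⟨w, hw, rfl⟩
    have hv' : v ∈ closure (Submodule.span ℂ S : Set (Lp ℂ p (wMeasure p ω))) := by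
      rw [← hMcoe]; exact hv
    have : B v ∈ closure (Submodule.span ℂ S : Set (Lp ℂ p (wMeasure p ω))) :=
      map_mem_closure B.continuous hv' hmaps
    rw [← hMcoe] at this; exact this
  have hBn : ∀ (j : ℕ) (v : Lp ℂ p (wMeasure p ω)), v ∈ M → (B ^ j) v ∈ M := by
    intro j
    induction j with
    | zero => intro v hv; simpa using hv
    | succ j ih =>
        intro v hv
        have : (B ^ (j + 1)) v = (B ^ j) (B v) := by rw [pow_succ]; rfl
        rw [this]
        exact ih _ (hBinv v hv)
  -- basis vectors
  have heMem : ∀ i : ℕ, MemLp (fun k => if k = i then (1 : ℂ) else 0) p (wMeasure p ω) :=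
    fun i => memℒp_of_NQ hp0 hp (by rw [NQ_single hq]; exact ENNReal.ofReal_ne_top)
  set e : ℕ → Lp ℂ p (wMeasure p ω) := fun i => (heMem i).toLp _ with he
  have heval : ∀ i k, e i k = if k = i then 1 else 0 := fun i k => Lp.apply_toLp hω (heMem i) k
  -- top nonzero coordinate of y
  obtain ⟨k0, hk0⟩ := Lp.exists_coord_ne_zero hω hy
  have hk0N : k0 ≤ N := by
    by_contra h
    exact hk0 (hfin k0 (by omega))
  set n : ℕ := Nat.findGreatest (fun k => y k ≠ 0) N with hn
  have hyn : y n ≠ 0 := Nat.findGreatest_spec (P := fun k => y k ≠ 0) hk0N hk0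
  have htop : ∀ k, n < k → y k = 0 := by
    intro k hk
    rcases le_or_gt k N with h | h
    · by_contra hne
      exact Nat.findGreatest_is_greatest hk h hne
    · exact hfin k h
  -- convergence of NQ of differences
  have hconv2 : Tendsto (fun k => NQ p ω
      (fun s => (lam k • ((B ^ m k) x)) s - y s)) atTop (𝓝 0) :=
    (tendsto_Lp_iff_NQ hp0 hp _ _).mp hconv
  -- main induction : e i ∈ M
  have heM : ∀ i : ℕ, e i ∈ M := by
    intro i
    induction i using Nat.strong_induction_on with
    | _ i IH =>
      have hgiMem : MemLp (fun s => if i ≤ s then y (s - i) else 0) p (wMeasure p ω) := by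
        apply memℒp_of_NQ hp0 hp
        exact ne_top_of_le_ne_top
          (ENNReal.mul_ne_top ENNReal.ofReal_ne_top (NQ_ne_top hp0 hp y))
          (hshift (fun s => y s) i)
      set zi : Lp ℂ p (wMeasure p ω) := hgiMem.toLp _ with hzi
      have hzieval : ∀ s, zi s = if i ≤ s then y (s - i) else 0 :=
        fun s => Lp.apply_toLp hω hgiMem s
      set u : ℕ → Lp ℂ p (wMeasure p ω) := fun k => lam k • ((B ^ (m k - i)) x) -
          ∑ t ∈ Finset.range i, (lam k * x ((m k - i) + t)) • e t with hu
      have huM : ∀ k, u k ∈ M := by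
        intro k
        apply Submodule.sub_mem
        · exact Submodule.smul_mem _ _ (hspanM (Submodule.subset_span ⟨m k - i, rfl⟩))
        · exact Submodule.sum_mem _
            (fun t ht => Submodule.smul_mem _ _ (IH t (Finset.mem_range.mp ht)))
      have hucoord : ∀ k, i ≤ k → ∀ s, u k s - zi s =
          (if i ≤ s then (lam k • ((B ^ m k) x)) (s - i) - y (s - i) else 0) := by
        intro k hk s
        have hmk : i ≤ m k := le_trans hk hm.le_apply
        have h1 : u k s = lam k * x ((m k - i) + s) -
            (if s < i then lam k * x ((m k - i) + s) else 0) := by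
          rw [hu]
          rw [Lp.apply_sub hω, Lp.apply_smul hω, hBpow, Lp.apply_sum hω]
          congr 1
          rw [Finset.sum_congr rfl (fun t _ => by
            rw [Lp.apply_smul hω, heval, mul_ite, mul_one, mul_zero])]
          rw [Finset.sum_ite_eq]
          simp [Finset.mem_range]
        by_cases hsi : i ≤ s
        · rw [h1, hzieval, if_neg (by omega : ¬ s < i), if_pos hsi, if_pos hsi, sub_zero,
            Lp.apply_smul hω, hBpow]
          have harith : (m k - i) + s = m k + (s - i) := by omega
          rw [harith]
        · rw [h1, hzieval, if_pos (by omega : s < i), if_neg hsi, if_neg hsi]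
          simp
      have hmain : Tendsto u atTop (𝓝 zi) := by
        rw [tendsto_Lp_iff_NQ hp0 hp]
        have hub : Tendsto (fun k => ENNReal.ofReal ((C ^ i) ^ p.toReal) *
            NQ p ω (fun s => (lam k • ((B ^ m k) x)) s - y s)) atTop (𝓝 0) := by
          have := ENNReal.Tendsto.const_mul (a := ENNReal.ofReal ((C ^ i) ^ p.toReal)) hconv2
            (Or.inr ENNReal.ofReal_ne_top)
          simpa using this
        apply tendsto_of_tendsto_of_tendsto_of_le_of_le' tendsto_const_nhds hub
        · exact Eventually.of_forall (fun k => zero_le (a := _))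
        · filter_upwards [eventually_ge_atTop i] with k hk
          have hfn : (fun s => u k s - zi s) =
              (fun s => if i ≤ s then
                (fun t => (lam k • ((B ^ m k) x)) t - y t) (s - i) else 0) := by
            funext s
            exact hucoord k hk s
          exact le_trans (le_of_eq (congrArg (NQ p ω) hfn))
            (hshift (fun t => (lam k • ((B ^ m k) x)) t - y t) i)
      have hziM : zi ∈ M :=
        hMclosed.mem_of_tendsto hmain (Eventually.of_forall (fun k => huM k))
      have hBnzi : (B ^ n) zi ∈ M := hBn n zi hziM
      have hid : (B ^ n) zi = y n • e i + ∑ t ∈ Finset.range i, zi (n + t) • e t := by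
        apply Lp.ext_coords hω
        intro s
        rw [hBpow, Lp.apply_add hω, Lp.apply_smul hω, Lp.apply_sum hω]
        rw [Finset.sum_congr rfl (fun t _ => by
          rw [Lp.apply_smul hω, heval, mul_ite, mul_one, mul_zero])]
        rw [Finset.sum_ite_eq]
        simp only [Finset.mem_range]
        rw [heval, mul_ite, mul_one, mul_zero]
        rcases lt_trichotomy s i with hlt | heq | hgt
        · rw [if_neg (by omega : ¬ s = i), if_pos hlt, zero_add]
        · subst heq
          rw [if_pos rfl, if_neg (by omega : ¬ s < s), add_zero, hzieval,
            if_pos (by omega : s ≤ n + s)]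
          congr 1
          omega
        · rw [if_neg (by omega : ¬ s = i), if_neg (by omega : ¬ s < i), zero_add, hzieval]
          by_cases hns : i ≤ n + s
          · rw [if_pos hns]
            exact htop _ (by omega)
          · rw [if_neg hns]
      have hyne : y n • e i ∈ M := by
        have h2 : ∑ t ∈ Finset.range i, zi (n + t) • e t ∈ M :=
          Submodule.sum_mem _
            (fun t ht => Submodule.smul_mem _ _ (IH t (Finset.mem_range.mp ht)))
        have h3 := hBnzi
        rw [hid] at h3
        simpa using Submodule.sub_mem M h3 h2
      have h4 := Submodule.smul_mem M (y n)⁻¹ hyne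
      rwa [smul_smul, inv_mul_cancel₀ hyn, one_smul] at h4
  -- M = ⊤
  have hMtop : M = ⊤ := by
    rw [eq_top_iff]
    intro f _
    have hTmem : ∀ nn : ℕ, (∑ k ∈ Finset.range (nn + 1), f k • e k) ∈ M :=
      fun nn => Submodule.sum_mem _ (fun k _ => Submodule.smul_mem _ _ (heM k))
    have hTconv : Tendsto (fun nn => ∑ k ∈ Finset.range (nn + 1), f k • e k) atTop (𝓝 f) := by
      rw [tendsto_Lp_iff_NQ hp0 hp]
      set G : ℕ → ℝ≥0∞ :=
        fun t => ENNReal.ofReal (ω t ^ p.toReal) * (‖f t‖₊ : ℝ≥0∞) ^ p.toReal with hG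
      have hGsum : ∑' t, G t ≠ ∞ := NQ_ne_top hp0 hp f
      have hre : ∀ nn : ℕ, NQ p ω
          (fun s => (∑ k ∈ Finset.range (nn + 1), f k • e k) s - f s) =
          ∑' t, G (t + (nn + 1)) := by
        intro nn
        have hco : ∀ s, (∑ k ∈ Finset.range (nn + 1), f k • e k) s - f s =
            if s < nn + 1 then 0 else -(f s) := by
          intro s
          rw [Lp.apply_sum hω]
          rw [Finset.sum_congr rfl (fun t _ => by
            rw [Lp.apply_smul hω, heval, mul_ite, mul_one, mul_zero])]
          rw [Finset.sum_ite_eq]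
          simp only [Finset.mem_range]
          by_cases h : s < nn + 1 <;> simp [h]
        have hinj : Function.Injective (fun t : ℕ => t + (nn + 1)) := add_left_injective (nn + 1)
        have hstep1 : NQ p ω
            (fun s => (∑ k ∈ Finset.range (nn + 1), f k • e k) s - f s) =
            ∑' s, (if s < nn + 1 then 0 else G s) := by
          rw [NQ]
          apply tsum_congr
          intro s
          rw [hco s]
          by_cases h : s < nn + 1 <;>
            simp [h, hG, ENNReal.zero_rpow_of_pos hq]
        rw [hstep1]
        rw [← Function.Injective.tsum_eq hinj (by
          intro s hs
          by_contra hrs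
          have hsl : s < nn + 1 := by
            rcases le_or_gt (nn + 1) s with h | h
            · exact absurd ⟨s - (nn + 1), by show s - (nn+1) + (nn+1) = s; omega⟩ hrs
            · exact h
          exact hs (by simp [hsl]))]
        apply tsum_congr
        intro t
        rw [if_neg (by omega : ¬ t + (nn + 1) < nn + 1)]
      have hcomp := (ENNReal.tendsto_sum_nat_add G hGsum).comp (tendsto_add_atTop_nat 1)
      exact hcomp.congr (fun nn => (hre nn).symm)
    exact hMclosed.mem_of_tendsto hTconv (Eventually.of_forall hTmem)
  exact Submodule.dense_iff_topologicalClosure_eq_top.mpr hMtop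
end
end
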